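/- For any improvement bag A (i.e., a bag A for which there exists v ∈ A with γ(A \ {v}) < γ(A)), the cut satisfies c(A) ≥ γ(A) − Δ (equivalently, c(A) + Δ ≥ γ(A)). -/

import Mathlib

open Finset

variable {V : Type*} [Fintype V] [DecidableEq V]

/-- The cut of a bag `A`: the number of edges of `G` with exactly one endpoint in `A`. -/
def cut (G : SimpleGraph V) [DecidableRel G.Adj] (A : Finset V) : ℕ :=
  ((A ×ˢ Aᶜ).filter fun p => G.Adj p.1 p.2).card

/-- An `(A–B)`-crusade of length `k+1`: a sequence of bags starting at `A`, ending at `B`,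
removing at most one node at each step. -/
def IsCrusade (A B : Finset V) (k : ℕ) (ω : ℕ → Finset V) : Prop :=
  ω 0 = A ∧ ω k = B ∧ ∀ i < k, (ω i \ ω (i + 1)).card ≤ 1

/-- The width of a crusade: the maximum cut encountered after the first bag. -/
def width (G : SimpleGraph V) [DecidableRel G.Adj] (k : ℕ) (ω : ℕ → Finset V) : ℕ :=
  (Finset.Icc 1 k).sup fun i => cut G (ω i)

/-- The resilience of a bag `A`: the minimum width over all `(A–∅)`-crusades. -/
noncomputable def resilience (G : SimpleGraph V) [DecidableRel G.Adj] (A : Finset V) : ℕ :=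
  sInf {w | ∃ (k : ℕ) (ω : ℕ → Finset V), IsCrusade A ∅ k ω ∧ width G k ω = w}

/-- A crusade is monotone if each bag contains the next. -/
def IsMonotone (k : ℕ) (ω : ℕ → Finset V) : Prop :=
  ∀ i < k, ω (i + 1) ⊆ ω i

/-- The CutWidth of `G`: the minimum width over all monotone `(V–∅)`-crusades. -/
noncomputable def cutWidth (G : SimpleGraph V) [DecidableRel G.Adj] : ℕ :=
  sInf {w | ∃ (k : ℕ) (ω : ℕ → Finset V),
    IsCrusade Finset.univ ∅ k ω ∧ IsMonotone k ω ∧ width G k ω = w}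

omit [Fintype V] in
lemma crusade_cons {A B : Finset V} {k : ℕ} {ω : ℕ → Finset V}
    (h : IsCrusade B ∅ k ω) (hAB : (A \ B).card ≤ 1) :
    IsCrusade A ∅ (k + 1) (fun j => if j = 0 then A else ω (j - 1)) := by
  obtain ⟨h0, hk, hstep⟩ := h
  refine ⟨rfl, by simp [hk], ?_⟩
  intro i hi
  rcases Nat.eq_zero_or_pos i with rfl | hpos
  · simpa [h0] using hAB
  · obtain ⟨j, rfl⟩ := Nat.exists_eq_add_of_lt hpos
    simp only [Nat.add_eq_zero, and_false, if_false, Nat.add_sub_cancel]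
    have : j < k := by omega
    simpa using hstep j this

omit [Fintype V] in
lemma exists_crusade (A : Finset V) : ∃ k ω, IsCrusade A ∅ k ω := by
  induction A using Finset.strongInductionOn with
  | _ A ih =>
    rcases A.eq_empty_or_nonempty with rfl | ⟨v, hv⟩
    · exact ⟨0, fun _ => ∅, rfl, rfl, by omega⟩
    · obtain ⟨k, ω, hcr⟩ := ih (A.erase v) (Finset.erase_ssubset hv)
      refine ⟨k + 1, _, crusade_cons hcr ?_⟩
      calc (A \ A.erase v).card ≤ ({v} : Finset V).card := by
            apply Finset.card_le_card
            intro x hx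
            simp only [Finset.mem_sdiff, Finset.mem_erase] at hx
            simp only [Finset.mem_singleton]
            tauto
        _ = 1 := Finset.card_singleton v

lemma cut_erase_le (G : SimpleGraph V) [DecidableRel G.Adj] (A : Finset V) (v : V) :
    cut G (A.erase v) ≤ cut G A + G.degree v := by
  classical
  set S := ((A.erase v ×ˢ (A.erase v)ᶜ).filter fun p => G.Adj p.1 p.2) with hS
  have hsplit : (S.filter fun p => p.2 = v).card + (S.filter fun p => ¬ p.2 = v).card
      = S.card := Finset.card_filter_add_card_filter_not _
  have h1 : (S.filter fun p => ¬ p.2 = v).card ≤ cut G A := by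
    apply Finset.card_le_card
    intro p hp
    simp only [hS, Finset.mem_filter, Finset.mem_product, Finset.mem_compl,
      Finset.mem_erase] at hp ⊢
    refine ⟨⟨hp.1.1.1.2, ?_⟩, hp.1.2⟩
    intro hpA
    exact hp.1.1.2 ⟨hp.2, hpA⟩
  have h2 : (S.filter fun p => p.2 = v).card ≤ G.degree v := by
    rw [← SimpleGraph.card_neighborFinset_eq_degree]
    apply Finset.card_le_card_of_injOn (fun p => p.1)
    · intro p hp
      simp only [hS, Finset.mem_filter, Finset.mem_coe] at hp
      rw [Finset.mem_coe, SimpleGraph.mem_neighborFinset]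
      exact (hp.2 ▸ hp.1.2).symm
    · intro p hp q hq hpq
      simp only [hS, Finset.mem_filter, Finset.mem_coe] at hp hq
      exact Prod.ext hpq (hp.2.trans hq.2.symm)
  calc cut G (A.erase v) = S.card := rfl
    _ = (S.filter fun p => p.2 = v).card + (S.filter fun p => ¬ p.2 = v).card := hsplit.symm
    _ ≤ G.degree v + cut G A := Nat.add_le_add h2 h1
    _ = cut G A + G.degree v := Nat.add_comm _ _

theorem cut_of_improvement_bag (G : SimpleGraph V) [DecidableRel G.Adj]
    (hconn : G.Connected) (hΔ : 0 < G.maxDegree) (A : Finset V)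
    (himp : ∃ v ∈ A, resilience G (A.erase v) < resilience G A) :
    resilience G A ≤ cut G A + G.maxDegree := by
  classical
  obtain ⟨v, hv, hlt⟩ := himp
  set B := A.erase v with hB
  -- the defining set of resilience G B is nonempty
  have hne : {w | ∃ (k : ℕ) (ω : ℕ → Finset V), IsCrusade B ∅ k ω ∧ width G k ω = w}.Nonempty := by
    obtain ⟨k, ω, hcr⟩ := exists_crusade B
    exact ⟨width G k ω, k, ω, hcr, rfl⟩
  obtain ⟨k, ω, hcr, hw⟩ := Nat.sInf_mem hne
  have hwres : width G k ω = resilience G B := hw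
  -- prepend A to get a crusade for A
  have hAB : (A \ B).card ≤ 1 := by
    calc (A \ B).card ≤ ({v} : Finset V).card := by
          apply Finset.card_le_card
          intro x hx
          simp only [hB, Finset.mem_sdiff, Finset.mem_erase] at hx
          simp only [Finset.mem_singleton]
          tauto
      _ = 1 := Finset.card_singleton v
  have hcr' := crusade_cons hcr hAB
  set ω' : ℕ → Finset V := fun j => if j = 0 then A else ω (j - 1) with hω'
  have hwidth : width G (k + 1) ω' ≤ max (cut G B) (resilience G B) := by
    apply Finset.sup_le
    intro i hi
    simp only [Finset.mem_Icc] at hi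
    have hi0 : i ≠ 0 := by omega
    have : ω' i = ω (i - 1) := by simp [hω', hi0]
    rw [this]
    rcases Nat.eq_or_lt_of_le hi.1 with h1 | h1
    · have : ω (i - 1) = B := by rw [← h1]; exact hcr.1
      rw [this]; exact le_max_left _ _
    · have hmem : i - 1 ∈ Finset.Icc 1 k := by
        simp only [Finset.mem_Icc]; omega
      have h3 : cut G (ω (i - 1)) ≤ width G k ω := Finset.le_sup (f := fun i => cut G (ω i)) hmem
      exact (hwres ▸ h3).trans (le_max_right _ _)
  have hres : resilience G A ≤ max (cut G B) (resilience G B) := by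
    refine le_trans (Nat.sInf_le ⟨k + 1, ω', hcr', rfl⟩) hwidth
  have hresB : resilience G A ≤ cut G B := by
    rcases max_cases (cut G B) (resilience G B) with ⟨heq, _⟩ | ⟨heq, _⟩
    · rwa [heq] at hres
    · rw [heq] at hres; omega
  have hdeg : G.degree v ≤ G.maxDegree := G.degree_le_maxDegree v
  have h4 := cut_erase_le G A v
  rw [hB] at hresB
  omega
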